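/- Let N ∈ ℕ and let p : {1,…,d} × {0,…,N} × [0,∞) → ℝ be such that each t ↦ p_i(m,t) is differentiable and satisfies the Kolmogorov forward equations p_i'(m,t) = Σ_{j=1}^d p_j(m,t) q_{ji} + p_i(m+1,t) μ_i (m+1) + p_i(m−1,t) λ_i (N−m+1) − p_i(m,t) μ_i m − p_i(m,t) λ_i (N−m), with p_i(−1,t) = p_i(N+1,t) = 0. Define φ_i(t,z) := Σ_{m=0}^N p_i(m,t) z^m. Then for all t ≥ 0, z ∈ ℝ, and i: ∂φ_i/∂t (t,z) = Σ_{j=1}^d φ_j(t,z) q_{ji} + μ_i (1−z) ∂φ_i/∂z (t,z) + λ_i N (z−1) φ_i(t,z) + λ_i z (1−z) ∂φ_i/∂z (t,z). -/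

import Mathlib

open Matrix

/-- If `t ↦ pᵢ(m,t)` satisfies the Kolmogorov forward equations, then
`φᵢ(t,z) := Σₘ pᵢ(m,t)zᵐ` satisfies the PDE
`∂φᵢ/∂t = Σⱼ φⱼ q_{ji} + μᵢ(1−z)∂φᵢ/∂z + λᵢN(z−1)φᵢ + λᵢz(1−z)∂φᵢ/∂z`. -/
theorem stmt_9
    (d : ℕ) (hd : 1 ≤ d)
    (Q : Matrix (Fin d) (Fin d) ℝ) (lam mu : Fin d → ℝ)
    (hQoff : ∀ i j, i ≠ j → 0 ≤ Q i j)
    (hQrow : ∀ i, ∑ j, Q i j = 0)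
    (hlam : ∀ i, 0 ≤ lam i) (hmu : ∀ i, 0 ≤ mu i)
    (N : ℕ) (p : Fin d → ℤ → ℝ → ℝ)
    (hp0 : ∀ (i : Fin d) (m : ℤ) (t : ℝ), m < 0 ∨ (N : ℤ) < m → p i m t = 0)
    (hderiv : ∀ (i : Fin d) (m : ℤ) (t : ℝ), 0 ≤ m → m ≤ (N : ℤ) → 0 ≤ t →
      HasDerivAt (p i m)
        ((∑ j, p j m t * Q j i) + p i (m + 1) t * mu i * ((m : ℝ) + 1)
          + p i (m - 1) t * lam i * ((N : ℝ) - (m : ℝ) + 1)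
          - p i m t * mu i * (m : ℝ) - p i m t * lam i * ((N : ℝ) - (m : ℝ))) t) :
    ∀ (t : ℝ), 0 ≤ t → ∀ (z : ℝ) (i : Fin d),
      HasDerivAt (fun s => ∑ m ∈ Finset.range (N + 1), p i (m : ℤ) s * z ^ m)
        ((∑ j, (∑ m ∈ Finset.range (N + 1), p j (m : ℤ) t * z ^ m) * Q j i)
          + mu i * (1 - z) *
              deriv (fun w => ∑ m ∈ Finset.range (N + 1), p i (m : ℤ) t * w ^ m) z
          + lam i * (N : ℝ) * (z - 1) * (∑ m ∈ Finset.range (N + 1), p i (m : ℤ) t * z ^ m)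
          + lam i * z * (1 - z) *
              deriv (fun w => ∑ m ∈ Finset.range (N + 1), p i (m : ℤ) t * w ^ m) z) t := by
  intro t ht z i
  -- the spatial derivative
  have hD : HasDerivAt (fun w => ∑ m ∈ Finset.range (N + 1), p i (m : ℤ) t * w ^ m)
      (∑ m ∈ Finset.range (N + 1), p i (m : ℤ) t * ((m : ℝ) * z ^ (m - 1))) z := by
    apply HasDerivAt.fun_sum
    intro m _
    exact (hasDerivAt_pow m z).const_mul _
  rw [hD.deriv]
  -- the time derivative, term by term
  have ht' : HasDerivAt (fun s => ∑ m ∈ Finset.range (N + 1), p i (m : ℤ) s * z ^ m)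
      (∑ m ∈ Finset.range (N + 1),
        ((∑ j, p j (m : ℤ) t * Q j i) + p i ((m : ℤ) + 1) t * mu i * (((m : ℤ) : ℝ) + 1)
          + p i ((m : ℤ) - 1) t * lam i * ((N : ℝ) - ((m : ℤ) : ℝ) + 1)
          - p i (m : ℤ) t * mu i * ((m : ℤ) : ℝ)
          - p i (m : ℤ) t * lam i * ((N : ℝ) - ((m : ℤ) : ℝ))) * z ^ m) t := by
    apply HasDerivAt.fun_sum
    intro m hm
    have hmN : (m : ℤ) ≤ (N : ℤ) := by
      exact_mod_cast Nat.lt_succ_iff.mp (Finset.mem_range.mp hm)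
    exact (hderiv i (m : ℤ) t (by positivity) hmN ht).mul_const _
  convert ht' using 1
  set S : ℝ := ∑ m ∈ Finset.range (N + 1), p i (m : ℤ) t * z ^ m with hS
  set D : ℝ := ∑ m ∈ Finset.range (N + 1), p i (m : ℤ) t * ((m : ℝ) * z ^ (m - 1)) with hDdef
  -- T = z * D
  have hT : ∑ m ∈ Finset.range (N + 1), p i (m : ℤ) t * (m : ℝ) * z ^ m = z * D := by
    rw [hDdef, Finset.mul_sum]
    refine Finset.sum_congr rfl fun m _ => ?_
    cases m with
    | zero => simp
    | succ k => simp [pow_succ]; ring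
  -- the B-sum (birth into m from m+1)
  have hB : ∑ m ∈ Finset.range (N + 1),
      p i ((m : ℤ) + 1) t * mu i * (((m : ℤ) : ℝ) + 1) * z ^ m = mu i * D := by
    rw [Finset.sum_range_succ, hp0 i ((N : ℤ) + 1) t (Or.inr (by omega)),
      hDdef, Finset.sum_range_succ']
    simp only [Nat.cast_zero, zero_mul, mul_zero, add_zero]
    rw [Finset.mul_sum]
    refine Finset.sum_congr rfl fun m _ => ?_
    rw [Nat.add_sub_cancel]
    push_cast
    ring
  -- the C-sum (from m-1)
  have hC : ∑ m ∈ Finset.range (N + 1),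
      p i ((m : ℤ) - 1) t * lam i * ((N : ℝ) - ((m : ℤ) : ℝ) + 1) * z ^ m
      = lam i * z * ((N : ℝ) * S - z * D) := by
    have hsub : ∑ m ∈ Finset.range (N + 1),
        p i (m : ℤ) t * lam i * ((N : ℝ) - (m : ℝ)) * z ^ m
        = lam i * ((N : ℝ) * S - z * D) := by
      rw [← hT, hS, mul_sub]
      simp only [Finset.mul_sum]
      rw [← Finset.sum_sub_distrib]
      refine Finset.sum_congr rfl fun m _ => ?_
      ring
    rw [Finset.sum_range_succ']
    have h0 : p i ((0 : ℤ) - 1) t = 0 := hp0 i _ t (Or.inl (by omega))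
    simp only [Nat.cast_zero, h0, zero_mul, mul_zero, add_zero]
    rw [show lam i * z * ((N : ℝ) * S - z * D) = z * (lam i * ((N : ℝ) * S - z * D)) from
        by ring, ← hsub, Finset.mul_sum, Finset.sum_range_succ]
    simp only [sub_self, mul_zero, zero_mul, add_zero]
    refine Finset.sum_congr rfl fun m _ => ?_
    rw [show (((m + 1 : ℕ) : ℤ) - 1 : ℤ) = (m : ℤ) from by push_cast; ring]
    push_cast
    ring
  -- the D-sum (death out of m)
  have hDm : ∑ m ∈ Finset.range (N + 1),
      p i (m : ℤ) t * mu i * ((m : ℤ) : ℝ) * z ^ m = mu i * (z * D) := by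
    rw [← hT, Finset.mul_sum]
    refine Finset.sum_congr rfl fun m _ => ?_
    push_cast
    ring
  -- the E-sum (birth out of m)
  have hE : ∑ m ∈ Finset.range (N + 1),
      p i (m : ℤ) t * lam i * ((N : ℝ) - ((m : ℤ) : ℝ)) * z ^ m
      = lam i * ((N : ℝ) * S - z * D) := by
    rw [← hT, hS, mul_sub]
    simp only [Finset.mul_sum]
    rw [← Finset.sum_sub_distrib]
    refine Finset.sum_congr rfl fun m _ => ?_
    push_cast
    ring
  -- the Q-sum
  have hA : ∑ m ∈ Finset.range (N + 1), (∑ j, p j (m : ℤ) t * Q j i) * z ^ m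
      = ∑ j, (∑ m ∈ Finset.range (N + 1), p j (m : ℤ) t * z ^ m) * Q j i := by
    simp_rw [Finset.sum_mul]
    rw [Finset.sum_comm]
    refine Finset.sum_congr rfl fun j _ => Finset.sum_congr rfl fun m _ => by ring
  calc (∑ j, (∑ m ∈ Finset.range (N + 1), p j (m : ℤ) t * z ^ m) * Q j i)
        + mu i * (1 - z) * D + lam i * (N : ℝ) * (z - 1) * S + lam i * z * (1 - z) * D
      = (∑ m ∈ Finset.range (N + 1), (∑ j, p j (m : ℤ) t * Q j i) * z ^ m)
        + (∑ m ∈ Finset.range (N + 1),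
            p i ((m : ℤ) + 1) t * mu i * (((m : ℤ) : ℝ) + 1) * z ^ m)
        + (∑ m ∈ Finset.range (N + 1),
            p i ((m : ℤ) - 1) t * lam i * ((N : ℝ) - ((m : ℤ) : ℝ) + 1) * z ^ m)
        - (∑ m ∈ Finset.range (N + 1), p i (m : ℤ) t * mu i * ((m : ℤ) : ℝ) * z ^ m)
        - (∑ m ∈ Finset.range (N + 1),
            p i (m : ℤ) t * lam i * ((N : ℝ) - ((m : ℤ) : ℝ)) * z ^ m) := by
        rw [hA, hB, hC, hDm, hE]; ring
    _ = _ := by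
        rw [← Finset.sum_add_distrib, ← Finset.sum_add_distrib, ← Finset.sum_sub_distrib,
          ← Finset.sum_sub_distrib]
        refine Finset.sum_congr rfl fun m _ => ?_
        ring
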